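/- Let $a \ge 2$, $C > 0$, and let $(\phi_n)_{n \ge 2}$ satisfy $|\phi_n| \le C\, \Gamma(n+1+a)$ for all $n \ge 2$. For $l \ge 2$ define $(\phi^l)_n$ as the $l$-fold Cauchy product coefficients: $(\phi^2)_n = \sum_{k=2}^{n-2}\phi_k\phi_{n-k}$ and $(\phi^l)_n = \sum_{k=2(l-1)}^{n-2} (\phi^{l-1})_k \phi_{n-k}$. Then, with $\bar C$ the constant from the convolution estimate $\sum_{k=2}^{n-2}\Gamma(k+1+a)\Gamma(n-k+1+a) \le \bar C\,\Gamma(n-1+a)$, one has $|(\phi^l)_n| \le C^l\, \bar C^{\,l-1}\, \Gamma(n - 2(l-1) + 1 + a)$ for all $n \ge 2l$. -/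

import Mathlib

theorem stmt_18 (a C Cbar : ℝ) (ha : a ≥ 2) (hC : C > 0) (hCbar : Cbar > 0)
    (φ : ℕ → ℂ)
    (hφ : ∀ n : ℕ, 2 ≤ n → ‖φ n‖ ≤ C * Real.Gamma (n + 1 + a))
    (hconv : ∀ n : ℕ, 4 ≤ n →
      ∑ k ∈ Finset.Icc 2 (n - 2),
        Real.Gamma (k + 1 + a) * Real.Gamma ((n - k : ℕ) + 1 + a) ≤
          Cbar * Real.Gamma ((n : ℝ) - 1 + a))
    (Φ : ℕ → ℕ → ℂ)
    (hΦ2 : ∀ n : ℕ, Φ 2 n = ∑ k ∈ Finset.Icc 2 (n - 2), φ k * φ (n - k))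
    (hΦ : ∀ l : ℕ, 3 ≤ l → ∀ n : ℕ,
      Φ l n = ∑ k ∈ Finset.Icc (2 * (l - 1)) (n - 2), Φ (l - 1) k * φ (n - k)) :
    ∀ l : ℕ, 2 ≤ l → ∀ n : ℕ, 2 * l ≤ n →
      ‖Φ l n‖ ≤
        C ^ l * Cbar ^ (l - 1) * Real.Gamma ((n : ℝ) - 2 * ((l : ℝ) - 1) + 1 + a) := by
  have hg : ∀ k : ℕ, 0 < Real.Gamma ((k : ℝ) + 1 + a) := fun k =>
    Real.Gamma_pos_of_pos (by have h0 : (0:ℝ) ≤ k := Nat.cast_nonneg k; linarith)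
  refine Nat.le_induction ?_ ?_
  · intro n hn
    have h4 : 4 ≤ n := by omega
    rw [hΦ2]
    calc ‖∑ k ∈ Finset.Icc 2 (n - 2), φ k * φ (n - k)‖
        ≤ ∑ k ∈ Finset.Icc 2 (n - 2), ‖φ k * φ (n - k)‖ :=
          norm_sum_le _ _
      _ ≤ ∑ k ∈ Finset.Icc 2 (n - 2),
            C * Real.Gamma ((k:ℝ) + 1 + a) * (C * Real.Gamma (((n - k : ℕ):ℝ) + 1 + a)) := by
          apply Finset.sum_le_sum
          intro k hk
          rcases Finset.mem_Icc.mp hk with ⟨h1, h2⟩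
          have h3 : 2 ≤ n - k := by omega
          rw [norm_mul]
          exact mul_le_mul (hφ k h1) (hφ _ h3) (norm_nonneg _)
            (le_of_lt (mul_pos hC (hg k)))
      _ = C * C * ∑ k ∈ Finset.Icc 2 (n - 2),
            Real.Gamma ((k:ℝ) + 1 + a) * Real.Gamma (((n - k : ℕ):ℝ) + 1 + a) := by
          rw [Finset.mul_sum]; exact Finset.sum_congr rfl fun k _ => by ring
      _ ≤ C * C * (Cbar * Real.Gamma ((n : ℝ) - 1 + a)) :=
          mul_le_mul_of_nonneg_left (hconv n h4) (by positivity)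
      _ = C ^ 2 * Cbar ^ (2 - 1) * Real.Gamma ((n : ℝ) - 2 * (((2:ℕ) : ℝ) - 1) + 1 + a) := by
          rw [show ((n : ℝ) - 2 * (((2:ℕ) : ℝ) - 1) + 1 + a) = (n : ℝ) - 1 + a by
            push_cast; ring]
          norm_num; ring
  · intro l hl IH n hn
    have hl3 : 3 ≤ l + 1 := by omega
    rw [hΦ (l + 1) hl3 n]
    simp only [Nat.add_sub_cancel]
    have hgk : ∀ k : ℕ, 2 * l ≤ k → 0 < Real.Gamma ((k:ℝ) - 2 * ((l:ℝ) - 1) + 1 + a) := by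
      intro k hk
      apply Real.Gamma_pos_of_pos
      have : (2 * l : ℝ) ≤ k := by exact_mod_cast hk
      have h0 : (0:ℝ) ≤ (l:ℝ) := Nat.cast_nonneg l
      nlinarith
    set m : ℕ := n - 2 * (l - 1) with hm
    have hm4 : 4 ≤ m := by omega
    calc ‖∑ k ∈ Finset.Icc (2 * (l + 1 - 1)) (n - 2), Φ l k * φ (n - k)‖
        ≤ ∑ k ∈ Finset.Icc (2 * (l + 1 - 1)) (n - 2), ‖Φ l k * φ (n - k)‖ :=
          norm_sum_le _ _
      _ ≤ ∑ k ∈ Finset.Icc (2 * (l + 1 - 1)) (n - 2),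
            C ^ l * Cbar ^ (l - 1) * Real.Gamma ((k:ℝ) - 2 * ((l:ℝ) - 1) + 1 + a) *
              (C * Real.Gamma (((n - k : ℕ):ℝ) + 1 + a)) := by
          apply Finset.sum_le_sum
          intro k hk
          rcases Finset.mem_Icc.mp hk with ⟨h1, h2⟩
          have h1' : 2 * l ≤ k := by omega
          have h3 : 2 ≤ n - k := by omega
          rw [norm_mul]
          refine mul_le_mul (IH k h1') (hφ _ h3) (norm_nonneg _) ?_
          have := hgk k h1'
          positivity
      _ = C ^ (l + 1) * Cbar ^ (l - 1) *
            ∑ k ∈ Finset.Icc (2 * (l + 1 - 1)) (n - 2),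
              Real.Gamma ((k:ℝ) - 2 * ((l:ℝ) - 1) + 1 + a) *
                Real.Gamma (((n - k : ℕ):ℝ) + 1 + a) := by
          rw [Finset.mul_sum]; exact Finset.sum_congr rfl fun k _ => by ring
      _ = C ^ (l + 1) * Cbar ^ (l - 1) *
            ∑ j ∈ Finset.Icc 2 (m - 2),
              Real.Gamma ((j:ℝ) + 1 + a) * Real.Gamma (((m - j : ℕ):ℝ) + 1 + a) := by
          congr 1
          have hmap : Finset.Icc (2 * (l + 1 - 1)) (n - 2)
              = Finset.map (addRightEmbedding (2 * (l - 1))) (Finset.Icc 2 (m - 2)) := by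
            rw [Finset.map_add_right_Icc]
            congr 1 <;> omega
          rw [hmap, Finset.sum_map]
          apply Finset.sum_congr rfl
          intro j hj
          rcases Finset.mem_Icc.mp hj with ⟨hj1, hj2⟩
          simp only [addRightEmbedding_apply]
          congr 2
          · push_cast [Nat.cast_sub (by omega : 1 ≤ l)]
            ring
          · congr 1
            have : n - (j + 2 * (l - 1)) = m - j := by omega
            rw [this]
      _ ≤ C ^ (l + 1) * Cbar ^ (l - 1) * (Cbar * Real.Gamma ((m : ℝ) - 1 + a)) := by
          apply mul_le_mul_of_nonneg_left (hconv m hm4)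
          positivity
      _ = C ^ (l + 1) * Cbar ^ (l + 1 - 1) *
            Real.Gamma ((n : ℝ) - 2 * (((l + 1 : ℕ) : ℝ) - 1) + 1 + a) := by
          have hmr : (m : ℝ) = (n : ℝ) - 2 * ((l : ℝ) - 1) := by
            have : (m : ℝ) = (n : ℝ) - (2 * (l - 1) : ℕ) := by
              rw [hm]; push_cast [Nat.cast_sub (by omega : 2 * (l - 1) ≤ n)]; ring
            rw [this]; push_cast [Nat.cast_sub (by omega : 1 ≤ l)]; ring
          rw [show ((n : ℝ) - 2 * (((l + 1 : ℕ) : ℝ) - 1) + 1 + a) = (m : ℝ) - 1 + a by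
            rw [hmr]; push_cast; ring]
          rw [Nat.add_sub_cancel,
            show Cbar ^ l = Cbar ^ (l - 1) * Cbar by
              rw [← pow_succ]; congr 1; omega]
          ring
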